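/- For p ∈ (0, 1) define on 2 × 2 complex matrices the keep–switch channel Φ_p(X) := V_K X V_Kᴴ + V_S X V_Sᴴ, where V_K := [[√p, 0], [0, √(1−p)]] and V_S := [[0, √p], [√(1−p), 0]]. Let p_1, …, p_n ∈ (0, 1) and set λ_n := 2^{n−1} · ∏_{j=1}^n √(p_j (1 − p_j)). Then for every 2 × 2 complex matrix X, writing t := X₀₀ + X₁₁ and s := X₀₁ + X₁₀: (a) (Φ_{p_n} ∘ ⋯ ∘ Φ_{p_1})(X) = [[p_n · t, λ_n · s], [λ_n · s, (1 − p_n) · t]]; and (b) if n ≥ 2, p_1 ≠ 1/2, and X is positive semidefinite and nonzero, then (Φ_{p_n} ∘ ⋯ ∘ Φ_{p_1})(X) is positive definite. -/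

import Mathlib

open Matrix
open scoped ComplexOrder

/-- "Keep" Kraus operator of the keep–switch channel. -/
noncomputable def ksVK (p : ℝ) : Matrix (Fin 2) (Fin 2) ℂ :=
  !![(Real.sqrt p : ℂ), 0; 0, (Real.sqrt (1 - p) : ℂ)]

/-- "Switch" Kraus operator of the keep–switch channel. -/
noncomputable def ksVS (p : ℝ) : Matrix (Fin 2) (Fin 2) ℂ :=
  !![0, (Real.sqrt p : ℂ); (Real.sqrt (1 - p) : ℂ), 0]

/-- The keep–switch channel `Φ_p(X) = V_K X V_Kᴴ + V_S X V_Sᴴ`. -/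
noncomputable def ksChannel (p : ℝ) (X : Matrix (Fin 2) (Fin 2) ℂ) :
    Matrix (Fin 2) (Fin 2) ℂ :=
  ksVK p * X * (ksVK p)ᴴ + ksVS p * X * (ksVS p)ᴴ

/-- `ksIter p n X = (Φ_{p n} ∘ ⋯ ∘ Φ_{p 1}) X`. -/
lemma ks_step (p : ℝ) (hp0 : 0 ≤ p) (hp1 : p ≤ 1) (Y : Matrix (Fin 2) (Fin 2) ℂ) :
    ksChannel p Y =
    !![(p : ℂ) * (Y 0 0 + Y 1 1), ((Real.sqrt (p * (1 - p)) : ℝ) : ℂ) * (Y 0 1 + Y 1 0);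
       ((Real.sqrt (p * (1 - p)) : ℝ) : ℂ) * (Y 0 1 + Y 1 0), ((1 - p : ℝ) : ℂ) * (Y 0 0 + Y 1 1)] := by
  have ha : ((Real.sqrt p : ℂ)) * (Real.sqrt p : ℂ) = (p : ℂ) := by
    rw [← Complex.ofReal_mul, Real.mul_self_sqrt hp0]
  have hb : ((Real.sqrt (1 - p) : ℂ)) * (Real.sqrt (1 - p) : ℂ) = ((1 - p : ℝ) : ℂ) := by
    rw [← Complex.ofReal_mul, Real.mul_self_sqrt (by linarith)]
  have hab : ((Real.sqrt p : ℂ)) * (Real.sqrt (1 - p) : ℂ) = ((Real.sqrt (p * (1 - p)) : ℝ) : ℂ) := by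
    rw [← Complex.ofReal_mul, Real.sqrt_mul hp0]
  ext i j
  fin_cases i <;> fin_cases j <;>
    simp [ksChannel, ksVK, ksVS, Matrix.mul_apply, Matrix.vecMul, dotProduct, Fin.sum_univ_two, Matrix.conjTranspose_apply] <;>
    [skip; skip; skip; skip]
  · linear_combination (Y 0 0 + Y 1 1) * ha
  · linear_combination (Y 0 1 + Y 1 0) * hab
  · linear_combination (Y 0 1 + Y 1 0) * hab
  · push_cast at hb ⊢; linear_combination (Y 0 0 + Y 1 1) * hb

noncomputable def ksIter (p : ℕ → ℝ) :
    ℕ → Matrix (Fin 2) (Fin 2) ℂ → Matrix (Fin 2) (Fin 2) ℂ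
  | 0 => fun X => X
  | n + 1 => fun X => ksChannel (p (n + 1)) (ksIter p n X)

lemma ksIter_formula (p : ℕ → ℝ) (m : ℕ)
    (hp : ∀ j, 1 ≤ j → j ≤ m + 1 → p j ∈ Set.Ioo (0 : ℝ) 1)
    (X : Matrix (Fin 2) (Fin 2) ℂ) :
    ksIter p (m + 1) X =
      !![((p (m + 1) : ℝ) : ℂ) * (X 0 0 + X 1 1),
         ((2 ^ m * ∏ j ∈ Finset.Icc 1 (m + 1), Real.sqrt (p j * (1 - p j)) : ℝ) : ℂ) * (X 0 1 + X 1 0);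
         ((2 ^ m * ∏ j ∈ Finset.Icc 1 (m + 1), Real.sqrt (p j * (1 - p j)) : ℝ) : ℂ) * (X 0 1 + X 1 0),
         ((1 - p (m + 1) : ℝ) : ℂ) * (X 0 0 + X 1 1)] := by
  induction m with
  | zero =>
      have h1 := hp 1 le_rfl le_rfl
      have := ks_step (p 1) h1.1.le h1.2.le X
      show ksChannel (p 1) X = _
      rw [this]
      norm_num
  | succ m ih =>
      have hm := hp (m + 1 + 1) (by omega) le_rfl
      have hrec := ih (fun j hj hj' => hp j hj (by omega))
      have e1 : ((p (m + 1) : ℝ) : ℂ) * (X 0 0 + X 1 1)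
          + ((1 - p (m + 1) : ℝ) : ℂ) * (X 0 0 + X 1 1) = X 0 0 + X 1 1 := by
        push_cast; ring
      have hprod : (2 : ℝ) ^ (m + 1) * ∏ j ∈ Finset.Icc 1 (m + 1 + 1), Real.sqrt (p j * (1 - p j))
          = Real.sqrt (p (m + 1 + 1) * (1 - p (m + 1 + 1))) *
            (2 * (2 ^ m * ∏ j ∈ Finset.Icc 1 (m + 1), Real.sqrt (p j * (1 - p j)))) := by
        rw [Finset.prod_Icc_succ_top (by omega : 1 ≤ m + 1 + 1)]
        ring
      have e2 : ((Real.sqrt (p (m + 1 + 1) * (1 - p (m + 1 + 1))) : ℝ) : ℂ) *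
            (((2 ^ m * ∏ j ∈ Finset.Icc 1 (m + 1), Real.sqrt (p j * (1 - p j)) : ℝ) : ℂ) * (X 0 1 + X 1 0)
             + ((2 ^ m * ∏ j ∈ Finset.Icc 1 (m + 1), Real.sqrt (p j * (1 - p j)) : ℝ) : ℂ) * (X 0 1 + X 1 0))
          = ((2 ^ (m + 1) * ∏ j ∈ Finset.Icc 1 (m + 1 + 1), Real.sqrt (p j * (1 - p j)) : ℝ) : ℂ) * (X 0 1 + X 1 0) := by
        rw [hprod]; push_cast
        ring
      show ksChannel (p (m + 1 + 1)) (ksIter p (m + 1) X) = _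
      rw [hrec, ks_step (p (m + 1 + 1)) hm.1.le hm.2.le]
      simp only [Matrix.cons_val', Matrix.cons_val_zero, Matrix.cons_val_one,
        Matrix.head_cons, Matrix.empty_val', Matrix.cons_val_fin_one,
        Matrix.head_fin_const, Matrix.of_apply]
      rw [e1, e2]

lemma quad_pos (a d c n0 n1 w : ℝ) (ha : 0 < a) (hd : 0 < d) (hc : c * c < a * d)
    (h0 : 0 ≤ n0) (h1 : 0 ≤ n1) (hsum : 0 < n0 + n1) (hw : w * w ≤ n0 * n1) :
    0 < a * n0 + d * n1 + 2 * c * w := by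
  rcases eq_or_lt_of_le h1 with h1' | h1'
  · have hw0 : w = 0 := by nlinarith
    have hn0 : 0 < n0 := by nlinarith
    rw [hw0, ← h1']
    nlinarith
  · nlinarith [sq_nonneg (a * w + c * n1), mul_pos h1' h1', mul_pos ha h1',
      mul_le_mul_of_nonneg_left hw ha.le, mul_pos (mul_pos ha h1') h1']

lemma posDef_fin2 (a d c : ℝ) (ha : 0 < a) (hd : 0 < d) (hc : c * c < a * d) :
    (!![(a : ℂ), (c : ℂ); (c : ℂ), (d : ℂ)]).PosDef := by
  rw [Matrix.posDef_iff_dotProduct_mulVec]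
  constructor
  · ext i j
    fin_cases i <;> fin_cases j <;>
      simp [Matrix.conjTranspose_apply, Complex.conj_ofReal]
  · intro v hv
    have hform : dotProduct (star v) ((!![(a : ℂ), (c : ℂ); (c : ℂ), (d : ℂ)]) *ᵥ v) =
        ((a * Complex.normSq (v 0) + d * Complex.normSq (v 1)
          + 2 * c * ((starRingEnd ℂ) (v 0) * v 1).re : ℝ) : ℂ) := by
      apply Complex.ext <;>
        simp [dotProduct, Matrix.mulVec, Matrix.vecMul, Fin.sum_univ_two,
          Complex.normSq_apply, Complex.add_re, Complex.add_im, Complex.mul_re,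
          Complex.mul_im] <;> ring
    rw [hform, Complex.zero_lt_real]
    have hv01 : v 0 ≠ 0 ∨ v 1 ≠ 0 := by
      by_contra h
      push_neg at h
      apply hv
      funext i
      fin_cases i <;> simp [h.1, h.2]
    have hsum : 0 < Complex.normSq (v 0) + Complex.normSq (v 1) := by
      rcases hv01 with h | h
      · have := Complex.normSq_pos.mpr h
        linarith [Complex.normSq_nonneg (v 1)]
      · have := Complex.normSq_pos.mpr h
        linarith [Complex.normSq_nonneg (v 0)]
    have hw : ((starRingEnd ℂ) (v 0) * v 1).re * ((starRingEnd ℂ) (v 0) * v 1).re ≤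
        Complex.normSq (v 0) * Complex.normSq (v 1) := by
      have h1 : ((starRingEnd ℂ) (v 0) * v 1).re ^ 2 ≤ Complex.normSq ((starRingEnd ℂ) (v 0) * v 1) := by
        rw [Complex.normSq_apply]
        nlinarith [sq_nonneg (((starRingEnd ℂ) (v 0) * v 1).im)]
      calc ((starRingEnd ℂ) (v 0) * v 1).re * ((starRingEnd ℂ) (v 0) * v 1).re
          = ((starRingEnd ℂ) (v 0) * v 1).re ^ 2 := by ring
        _ ≤ Complex.normSq ((starRingEnd ℂ) (v 0) * v 1) := h1
        _ = Complex.normSq (v 0) * Complex.normSq (v 1) := by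
            rw [Complex.normSq_mul, Complex.normSq_conj]
    exact quad_pos a d c _ _ _ ha hd hc (Complex.normSq_nonneg _) (Complex.normSq_nonneg _) hsum hw


set_option maxHeartbeats 1000000 in
/-- **Explicit formula and eventual strict positivity for the keep–switch
channel.**  With `λ_n = 2^{n-1} ∏_{j=1}^n √(p_j (1-p_j))`, `t = X₀₀ + X₁₁` and
`s = X₀₁ + X₁₀`, (a) gives the form of `(Φ_{p n} ∘ ⋯ ∘ Φ_{p 1})(X)`, and (b)
for `n ≥ 2`, `p 1 ≠ 1/2` and nonzero positive semidefinite `X`, the result is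
positive definite. -/
theorem stmt18 (p : ℕ → ℝ) (n : ℕ) (hn : 1 ≤ n)
    (hp : ∀ j, 1 ≤ j → j ≤ n → p j ∈ Set.Ioo (0 : ℝ) 1)
    (lam : ℝ)
    (hlam : lam = 2 ^ (n - 1) * ∏ j ∈ Finset.Icc 1 n, Real.sqrt (p j * (1 - p j)))
    (X : Matrix (Fin 2) (Fin 2) ℂ) :
    (ksIter p n X =
      !![((p n : ℝ) : ℂ) * (X 0 0 + X 1 1), (lam : ℂ) * (X 0 1 + X 1 0);
         (lam : ℂ) * (X 0 1 + X 1 0), ((1 - p n : ℝ) : ℂ) * (X 0 0 + X 1 1)]) ∧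
    (2 ≤ n → p 1 ≠ 1 / 2 → X.PosSemidef → X ≠ 0 → (ksIter p n X).PosDef) := by
  obtain ⟨m, rfl⟩ : ∃ m, n = m + 1 := ⟨n - 1, by omega⟩
  simp only [Nat.add_sub_cancel] at hlam
  have parta : ksIter p (m + 1) X =
      !![((p (m + 1) : ℝ) : ℂ) * (X 0 0 + X 1 1), (lam : ℂ) * (X 0 1 + X 1 0);
         (lam : ℂ) * (X 0 1 + X 1 0), ((1 - p (m + 1) : ℝ) : ℂ) * (X 0 0 + X 1 1)] := by
    rw [hlam]
    exact ksIter_formula p m hp X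
  refine ⟨parta, ?_⟩
  intro hn2 hp1 hX hX0
  rw [Matrix.posSemidef_iff_dotProduct_mulVec] at hX
  have hpn := hp (m + 1) (by omega) le_rfl
  -- basic hermitian facts
  have h10 : X 1 0 = (starRingEnd ℂ) (X 0 1) := by
    have := congrFun (congrFun hX.1 1) 0
    rw [Matrix.conjTranspose_apply] at this
    exact this.symm
  have key : ∀ z w : ℂ, dotProduct (star ![z, w]) (X *ᵥ ![z, w]) =
      (starRingEnd ℂ) z * (X 0 0 * z + X 0 1 * w) +
      (starRingEnd ℂ) w * (X 1 0 * z + X 1 1 * w) := by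
    intro z w
    simp only [dotProduct, Matrix.mulVec, Fin.sum_univ_two, Matrix.cons_val_zero,
      Matrix.cons_val_one, Matrix.head_cons, Pi.star_apply, Complex.star_def]
  have h00 : 0 ≤ X 0 0 := by
    have := hX.2 ![1, 0]
    rw [key 1 0] at this
    simpa using this
  have h11 : 0 ≤ X 1 1 := by
    have := hX.2 ![0, 1]
    rw [key 0 1] at this
    simpa using this
  set x00 := (X 0 0).re with hx00
  set x11 := (X 1 1).re with hx11
  have hX00 : X 0 0 = ((x00 : ℝ) : ℂ) := by
    apply Complex.ext <;> simp [hx00, (Complex.nonneg_iff.mp h00).2.symm]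
  have hX11 : X 1 1 = ((x11 : ℝ) : ℂ) := by
    apply Complex.ext <;> simp [hx11, (Complex.nonneg_iff.mp h11).2.symm]
  have hx00n : 0 ≤ x00 := (Complex.nonneg_iff.mp h00).1
  have hx11n : 0 ≤ x11 := (Complex.nonneg_iff.mp h11).1
  set tr := x00 + x11 with htrdef
  set sr := 2 * (X 0 1).re with hsrdef
  have ht : X 0 0 + X 1 1 = ((tr : ℝ) : ℂ) := by
    rw [hX00, hX11, htrdef, Complex.ofReal_add]
  have hs : X 0 1 + X 1 0 = ((sr : ℝ) : ℂ) := by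
    rw [h10, Complex.add_conj, hsrdef, Complex.ofReal_mul]
  -- tr > 0
  have htr : 0 < tr := by
    rcases lt_or_eq_of_le (by positivity : (0:ℝ) ≤ tr) with h | h
    · exact h
    · exfalso
      have hx000 : x00 = 0 := by rw [htrdef] at h; linarith
      have hx110 : x11 = 0 := by rw [htrdef] at h; linarith
      have hX000 : X 0 0 = 0 := by rw [hX00, hx000]; norm_num
      have hX110 : X 1 1 = 0 := by rw [hX11, hx110]; norm_num
      have hq := hX.2 ![1, -(starRingEnd ℂ) (X 0 1)]
      rw [key 1 (-(starRingEnd ℂ) (X 0 1))] at hq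
      have hval : (starRingEnd ℂ) 1 * (X 0 0 * 1 + X 0 1 * -(starRingEnd ℂ) (X 0 1)) +
          (starRingEnd ℂ) (-(starRingEnd ℂ) (X 0 1)) *
            (X 1 0 * 1 + X 1 1 * -(starRingEnd ℂ) (X 0 1))
          = ((-2 * Complex.normSq (X 0 1) : ℝ) : ℂ) := by
        rw [hX000, hX110, h10]
        simp only [_root_.map_one, _root_.map_neg, Complex.conj_conj, one_mul, mul_one, mul_zero, zero_mul,
          zero_add, add_zero, neg_zero, mul_neg, neg_mul, Complex.mul_conj]
        push_cast
        ring
      rw [hval] at hq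
      have hns : Complex.normSq (X 0 1) = 0 := by
        have h2 := Complex.zero_le_real.mp hq
        nlinarith [Complex.normSq_nonneg (X 0 1)]
      have hX010 : X 0 1 = 0 := Complex.normSq_eq_zero.mp hns
      apply hX0
      ext i j
      fin_cases i <;> fin_cases j <;>
        simp [hX000, hX110, hX010, h10]
  -- |sr| ≤ tr
  have hA : (0:ℝ) ≤ tr + sr := by
    have h := hX.2 ![1, 1]
    rw [key 1 1] at h
    have e : (starRingEnd ℂ) 1 * (X 0 0 * 1 + X 0 1 * 1) +
        (starRingEnd ℂ) 1 * (X 1 0 * 1 + X 1 1 * 1) = ((tr + sr : ℝ) : ℂ) := by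
      simp only [_root_.map_one, one_mul, mul_one]
      linear_combination ht + hs - Complex.ofReal_add tr sr
    rw [e] at h
    exact Complex.zero_le_real.mp h
  have hB : (0:ℝ) ≤ tr - sr := by
    have h := hX.2 ![1, -1]
    rw [key 1 (-1)] at h
    have e : (starRingEnd ℂ) 1 * (X 0 0 * 1 + X 0 1 * (-1)) +
        (starRingEnd ℂ) (-1) * (X 1 0 * 1 + X 1 1 * (-1)) = ((tr - sr : ℝ) : ℂ) := by
      simp only [_root_.map_one, _root_.map_neg, one_mul, mul_one, mul_neg, neg_mul, neg_neg]
      linear_combination ht - hs - Complex.ofReal_sub tr sr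
    rw [e] at h
    exact Complex.zero_le_real.mp h
  have hs2 : sr * sr ≤ tr * tr := by nlinarith
  -- lambda bounds
  have hm1 : 1 ≤ m := by omega
  have hlam0 : 0 ≤ lam := by
    rw [hlam]
    exact mul_nonneg (by positivity) (Finset.prod_nonneg fun j _ => Real.sqrt_nonneg _)
  have hlamsq : lam * lam < p (m + 1) * (1 - p (m + 1)) := by
    rw [Finset.prod_Icc_succ_top (by omega : 1 ≤ m + 1)] at hlam
    set g : ℕ → ℝ := fun j => 2 * Real.sqrt (p j * (1 - p j)) with hg
    set μ : ℝ := ∏ j ∈ Finset.Icc 1 m, g j with hμ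
    have hμeq : lam = μ * Real.sqrt (p (m + 1) * (1 - p (m + 1))) := by
      rw [hlam, hμ, hg, Finset.prod_mul_distrib, Finset.prod_const, Nat.card_Icc]
      simp only [Nat.add_sub_cancel]
      ring
    have hgnn : ∀ j ∈ Finset.Icc 1 m, 0 ≤ g j := by
      intro j _
      simp only [hg]
      positivity
    have hgle : ∀ j ∈ Finset.Icc 1 m, g j ≤ 1 := by
      intro j hj
      rw [Finset.mem_Icc] at hj
      have hpj := hp j hj.1 (by omega)
      have h14 : p j * (1 - p j) ≤ 1 / 4 := by nlinarith [sq_nonneg (p j - 1 / 2)]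
      have hsq : Real.sqrt (p j * (1 - p j)) ≤ 1 / 2 := by
        have h4 : Real.sqrt (1 / 4) = 1 / 2 := by
          rw [show (1/4 : ℝ) = (1/2) ^ 2 by norm_num, Real.sqrt_sq (by norm_num : (0:ℝ) ≤ 1/2)]
        calc Real.sqrt (p j * (1 - p j)) ≤ Real.sqrt (1 / 4) := Real.sqrt_le_sqrt h14
          _ = 1 / 2 := h4
      simp only [hg]
      linarith
    have hμ0 : 0 ≤ μ := Finset.prod_nonneg hgnn
    have h1mem : (1 : ℕ) ∈ Finset.Icc 1 m := by
      rw [Finset.mem_Icc]; omega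
    have hg1lt : g 1 < 1 := by
      have hp1' := hp 1 (by omega) (by omega)
      have hne : p 1 - 1 / 2 ≠ 0 := sub_ne_zero_of_ne hp1
      have hposq : 0 < (p 1 - 1 / 2) ^ 2 :=
        lt_of_le_of_ne (sq_nonneg _) (Ne.symm (pow_ne_zero 2 hne))
      have h14 : p 1 * (1 - p 1) < 1 / 4 := by nlinarith
      have hsq : Real.sqrt (p 1 * (1 - p 1)) < 1 / 2 := by
        rw [show (1/2 : ℝ) = Real.sqrt ((1/2) ^ 2) from
          (Real.sqrt_sq (by norm_num : (0:ℝ) ≤ 1/2)).symm]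
        apply Real.sqrt_lt_sqrt (by nlinarith [hp1'.1, hp1'.2]) (by nlinarith)
      simp only [hg]
      linarith
    have hμ1 : μ < 1 := by
      have hrest0 : 0 ≤ ∏ j ∈ (Finset.Icc 1 m).erase 1, g j :=
        Finset.prod_nonneg fun j hj => hgnn j (Finset.mem_of_mem_erase hj)
      have hrest1 : ∏ j ∈ (Finset.Icc 1 m).erase 1, g j ≤ 1 :=
        Finset.prod_le_one (fun j hj => hgnn j (Finset.mem_of_mem_erase hj))
          (fun j hj => hgle j (Finset.mem_of_mem_erase hj))
      calc μ = g 1 * ∏ j ∈ (Finset.Icc 1 m).erase 1, g j :=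
            (Finset.mul_prod_erase _ _ h1mem).symm
        _ ≤ g 1 := mul_le_of_le_one_right (hgnn 1 h1mem) hrest1
        _ < 1 := hg1lt
    have hppos : 0 < p (m + 1) * (1 - p (m + 1)) :=
      mul_pos hpn.1 (by linarith [hpn.2])
    have hsqrt : Real.sqrt (p (m + 1) * (1 - p (m + 1))) *
        Real.sqrt (p (m + 1) * (1 - p (m + 1))) = p (m + 1) * (1 - p (m + 1)) :=
      Real.mul_self_sqrt hppos.le
    calc lam * lam = μ * μ * (Real.sqrt (p (m + 1) * (1 - p (m + 1))) *
          Real.sqrt (p (m + 1) * (1 - p (m + 1)))) := by rw [hμeq]; ring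
      _ = μ * μ * (p (m + 1) * (1 - p (m + 1))) := by rw [hsqrt]
      _ < 1 * (p (m + 1) * (1 - p (m + 1))) := by
          have hμμ : μ * μ < 1 := by nlinarith
          exact mul_lt_mul_of_pos_right hμμ hppos
      _ = p (m + 1) * (1 - p (m + 1)) := one_mul _
  -- finish
  have hM : ksIter p (m + 1) X =
      !![((p (m + 1) * tr : ℝ) : ℂ), ((lam * sr : ℝ) : ℂ);
         ((lam * sr : ℝ) : ℂ), (((1 - p (m + 1)) * tr : ℝ) : ℂ)] := by
    rw [parta, ht, hs]
    simp only [Complex.ofReal_mul]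
  rw [hM]
  apply posDef_fin2
  · exact mul_pos hpn.1 htr
  · exact mul_pos (by linarith [hpn.2]) htr
  · nlinarith [mul_le_mul_of_nonneg_left hs2 (mul_nonneg hlam0 hlam0),
      mul_lt_mul_of_pos_right hlamsq (mul_pos htr htr)]
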